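/- Let R₁, R₂, R₁₂ be commutative rings with ring homomorphisms R₁ → R₁₂ and R₂ → R₁₂ such that R₁₂ is flat as an R₁-module and as an R₂-module, and such that the multiplication map R₁₂ ⊗_{R₂} R₁₂ → R₁₂ is bijective. Then for every triple (M₁, M₂, φ), where M₁ is a finitely generated R₁-module, M₂ is a finitely generated R₂-module, and φ : M₁ ⊗_{R₁} R₁₂ → M₂ ⊗_{R₂} R₁₂ is an R₁₂-linear isomorphism, there exist an integer n ≥ 0, an R₁₂-linear automorphism α of R₁₂ⁿ, a surjective R₁-linear map f₁ : R₁ⁿ → M₁ and a surjective R₂-linear map f₂ : R₂ⁿ → M₂ such that, under the canonical identifications R₁ⁿ ⊗_{R₁} R₁₂ ≅ R₁₂ⁿ and R₂ⁿ ⊗_{R₂} R₁₂ ≅ R₁₂ⁿ, one has φ ∘ (f₁ ⊗ id_{R₁₂}) = (f₂ ⊗ id_{R₁₂}) ∘ α. -/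

import Mathlib

open TensorProduct

/-- The canonical `R₁₂`-linear identification `R₁₂ ⊗[R] (Fin n → R) ≃ (Fin n → R₁₂)`
coming from the standard basis of `Fin n → R`. -/
noncomputable def freeBaseChangeEquiv (R R₁₂ : Type*) [CommRing R] [CommRing R₁₂]
    [Algebra R R₁₂] (n : ℕ) :
    (R₁₂ ⊗[R] (Fin n → R)) ≃ₗ[R₁₂] (Fin n → R₁₂) :=
  (Algebra.TensorProduct.basis R₁₂ (Pi.basisFun R (Fin n))).equivFun

section Aux

variable {R A : Type*} [CommRing R] [CommRing A] [Algebra R A]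

lemma freeBaseChangeEquiv_symm_apply (n : ℕ) (c : Fin n → A) :
    (freeBaseChangeEquiv R A n).symm c = ∑ i, c i ⊗ₜ[R] Pi.single i (1 : R) := by
  simp only [freeBaseChangeEquiv, Module.Basis.equivFun_symm_apply]
  refine Finset.sum_congr rfl fun i _ => ?_
  rw [Algebra.TensorProduct.basis_repr_symm_apply', Pi.basisFun_apply]

lemma baseChange_fbce_symm_apply {M : Type*} [AddCommGroup M] [Module R M] {n : ℕ}
    (f : (Fin n → R) →ₗ[R] M) (c : Fin n → A) :
    f.baseChange A ((freeBaseChangeEquiv R A n).symm c)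
      = ∑ i, c i ⊗ₜ[R] f (Pi.single i (1 : R)) := by
  rw [freeBaseChangeEquiv_symm_apply, map_sum]
  simp

lemma funLeft_single_castAdd {m k : ℕ} (i : Fin m) :
    LinearMap.funLeft R R (Fin.castAdd k) (Pi.single (Fin.castAdd k i) (1 : R))
      = Pi.single i 1 := by
  funext j
  by_cases h : j = i
  · subst h; simp
  · have h1 : Fin.castAdd k j ≠ Fin.castAdd k i := fun e => h (Fin.castAdd_injective _ _ e)
    simp [LinearMap.funLeft_apply, Pi.single_eq_of_ne h1, Pi.single_eq_of_ne h]

lemma funLeft_castAdd_single_natAdd {m k : ℕ} (i : Fin k) :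
    LinearMap.funLeft R R (Fin.castAdd k) (Pi.single (Fin.natAdd m i) (1 : R)) = 0 := by
  funext j
  have hj := j.isLt
  have h1 : Fin.castAdd k j ≠ Fin.natAdd m i := by
    simp only [ne_eq, Fin.ext_iff, Fin.coe_castAdd, Fin.coe_natAdd]
    omega
  simp [LinearMap.funLeft_apply, Pi.single_eq_of_ne h1]

lemma funLeft_single_natAdd {m k : ℕ} (i : Fin k) :
    LinearMap.funLeft R R (Fin.natAdd m) (Pi.single (Fin.natAdd m i) (1 : R))
      = Pi.single i 1 := by
  funext j
  by_cases h : j = i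
  · subst h; simp
  · have h1 : Fin.natAdd m j ≠ Fin.natAdd m i := by
      simp only [ne_eq, Fin.ext_iff, Fin.coe_natAdd]
      exact fun e => h (Fin.val_injective (by omega))
    simp [LinearMap.funLeft_apply, Pi.single_eq_of_ne h1, Pi.single_eq_of_ne h]

lemma funLeft_natAdd_single_castAdd {m k : ℕ} (i : Fin m) :
    LinearMap.funLeft R R (Fin.natAdd m) (Pi.single (Fin.castAdd k i) (1 : R)) = 0 := by
  funext j
  have hi := i.isLt
  have h1 : Fin.natAdd m j ≠ Fin.castAdd k i := by
    simp only [ne_eq, Fin.ext_iff, Fin.coe_castAdd, Fin.coe_natAdd]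
    omega
  simp [LinearMap.funLeft_apply, Pi.single_eq_of_ne h1]

lemma baseChange_funLeft_castAdd {M : Type*} [AddCommGroup M] [Module R M] {m k : ℕ}
    (f : (Fin m → R) →ₗ[R] M) (c : Fin (m + k) → A) :
    (f ∘ₗ LinearMap.funLeft R R (Fin.castAdd k)).baseChange A
        ((freeBaseChangeEquiv R A (m + k)).symm c)
      = f.baseChange A
          ((freeBaseChangeEquiv R A m).symm (LinearMap.funLeft A A (Fin.castAdd k) c)) := by
  rw [baseChange_fbce_symm_apply, baseChange_fbce_symm_apply, Fin.sum_univ_add]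
  simp only [LinearMap.comp_apply, funLeft_single_castAdd, funLeft_castAdd_single_natAdd,
    map_zero, tmul_zero, Finset.sum_const_zero, add_zero, LinearMap.funLeft_apply]

lemma baseChange_funLeft_natAdd {M : Type*} [AddCommGroup M] [Module R M] {m k : ℕ}
    (f : (Fin k → R) →ₗ[R] M) (c : Fin (m + k) → A) :
    (f ∘ₗ LinearMap.funLeft R R (Fin.natAdd m)).baseChange A
        ((freeBaseChangeEquiv R A (m + k)).symm c)
      = f.baseChange A
          ((freeBaseChangeEquiv R A k).symm (LinearMap.funLeft A A (Fin.natAdd m) c)) := by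
  rw [baseChange_fbce_symm_apply, baseChange_fbce_symm_apply, Fin.sum_univ_add]
  simp only [LinearMap.comp_apply, funLeft_single_natAdd, funLeft_natAdd_single_castAdd,
    map_zero, tmul_zero, Finset.sum_const_zero, zero_add, LinearMap.funLeft_apply]

/-- `Fin.append` as a linear map. -/
def appendLM (A : Type*) [CommRing A] (m k : ℕ) :
    ((Fin m → A) × (Fin k → A)) →ₗ[A] (Fin (m + k) → A) where
  toFun pq := Fin.append pq.1 pq.2
  map_add' x y := by
    funext j
    refine Fin.addCases (fun i => ?_) (fun i => ?_) j <;>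
      simp [Fin.append_left, Fin.append_right]
  map_smul' r x := by
    funext j
    refine Fin.addCases (fun i => ?_) (fun i => ?_) j <;>
      simp [Fin.append_left, Fin.append_right]

lemma funLeft_castAdd_appendLM {m k : ℕ} (pq : (Fin m → A) × (Fin k → A)) :
    LinearMap.funLeft A A (Fin.castAdd k) (appendLM A m k pq) = pq.1 := by
  funext i
  simp [appendLM, LinearMap.funLeft_apply, Fin.append_left]

lemma funLeft_natAdd_appendLM {m k : ℕ} (pq : (Fin m → A) × (Fin k → A)) :
    LinearMap.funLeft A A (Fin.natAdd m) (appendLM A m k pq) = pq.2 := by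
  funext i
  simp [appendLM, LinearMap.funLeft_apply, Fin.append_right]

lemma appendLM_proj {m k : ℕ} (c : Fin (m + k) → A) :
    appendLM A m k (LinearMap.funLeft A A (Fin.castAdd k) c,
      LinearMap.funLeft A A (Fin.natAdd m) c) = c := by
  funext j
  refine Fin.addCases (fun i => ?_) (fun i => ?_) j <;>
    simp [appendLM, LinearMap.funLeft_apply, Fin.append_left, Fin.append_right]

/-- The splitting `(Fin (m+k) → A) ≃ₗ (Fin m → A) × (Fin k → A)`. -/
def sumSplitEquiv (A : Type*) [CommRing A] (m k : ℕ) :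
    (Fin (m + k) → A) ≃ₗ[A] ((Fin m → A) × (Fin k → A)) :=
  LinearEquiv.ofLinear
    (LinearMap.prod (LinearMap.funLeft A A (Fin.castAdd k))
      (LinearMap.funLeft A A (Fin.natAdd m)))
    (appendLM A m k)
    (LinearMap.ext fun pq => by
      simp [LinearMap.prod_apply, funLeft_castAdd_appendLM, funLeft_natAdd_appendLM])
    (LinearMap.ext fun c => by simp [LinearMap.prod_apply, appendLM_proj])

/-- Lower-triangular elementary automorphism `(p, q) ↦ (p, q + a p)`. -/
def elemLower {P Q : Type*} [AddCommGroup P] [AddCommGroup Q] [Module A P] [Module A Q]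
    (a : P →ₗ[A] Q) : (P × Q) ≃ₗ[A] (P × Q) :=
  LinearEquiv.ofLinear
    (LinearMap.prod (LinearMap.fst A P Q) (LinearMap.snd A P Q + a ∘ₗ LinearMap.fst A P Q))
    (LinearMap.prod (LinearMap.fst A P Q) (LinearMap.snd A P Q - a ∘ₗ LinearMap.fst A P Q))
    (LinearMap.ext fun x => by
      simp [LinearMap.prod_apply, LinearMap.sub_apply, LinearMap.add_apply])
    (LinearMap.ext fun x => by
      simp [LinearMap.prod_apply, LinearMap.sub_apply, LinearMap.add_apply])

/-- Upper-triangular elementary automorphism `(p, q) ↦ (p - b q, q)`. -/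
def elemUpper {P Q : Type*} [AddCommGroup P] [AddCommGroup Q] [Module A P] [Module A Q]
    (b : Q →ₗ[A] P) : (P × Q) ≃ₗ[A] (P × Q) :=
  LinearEquiv.ofLinear
    (LinearMap.prod (LinearMap.fst A P Q - b ∘ₗ LinearMap.snd A P Q) (LinearMap.snd A P Q))
    (LinearMap.prod (LinearMap.fst A P Q + b ∘ₗ LinearMap.snd A P Q) (LinearMap.snd A P Q))
    (LinearMap.ext fun x => by
      simp [LinearMap.prod_apply, LinearMap.sub_apply, LinearMap.add_apply])
    (LinearMap.ext fun x => by
      simp [LinearMap.prod_apply, LinearMap.sub_apply, LinearMap.add_apply])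

lemma natAdd_injective (m k : ℕ) : Function.Injective (Fin.natAdd m : Fin k → Fin (m + k)) :=
  fun i j h => Fin.val_injective (by
    have := congrArg Fin.val h
    simp only [Fin.coe_natAdd] at this
    omega)

end Aux

theorem triple_quotient_of_free_triple
    {R₁ R₂ R₁₂ : Type*} [CommRing R₁] [CommRing R₂] [CommRing R₁₂]
    [Algebra R₁ R₁₂] [Algebra R₂ R₁₂]
    [Module.Flat R₁ R₁₂] [Module.Flat R₂ R₁₂]
    (hmul : Function.Bijective (LinearMap.mul' R₂ R₁₂))
    {M₁ M₂ : Type*} [AddCommGroup M₁] [Module R₁ M₁] [AddCommGroup M₂] [Module R₂ M₂]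
    [Module.Finite R₁ M₁] [Module.Finite R₂ M₂]
    (φ : R₁₂ ⊗[R₁] M₁ ≃ₗ[R₁₂] R₁₂ ⊗[R₂] M₂) :
    ∃ (n : ℕ) (α : (Fin n → R₁₂) ≃ₗ[R₁₂] (Fin n → R₁₂))
      (f₁ : (Fin n → R₁) →ₗ[R₁] M₁) (f₂ : (Fin n → R₂) →ₗ[R₂] M₂),
      Function.Surjective f₁ ∧ Function.Surjective f₂ ∧
        φ.toLinearMap ∘ₗ f₁.baseChange R₁₂ ∘ₗ (freeBaseChangeEquiv R₁ R₁₂ n).symm.toLinearMap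
          = f₂.baseChange R₁₂ ∘ₗ (freeBaseChangeEquiv R₂ R₁₂ n).symm.toLinearMap
              ∘ₗ α.toLinearMap := by
  classical
  obtain ⟨n₁, g₁, hg₁⟩ := Module.Finite.exists_fin' R₁ M₁
  obtain ⟨n₂, g₂, hg₂⟩ := Module.Finite.exists_fin' R₂ M₂
  set n := n₁ + n₂ with hn
  set u : (Fin n₁ → R₁₂) →ₗ[R₁₂] (R₁₂ ⊗[R₂] M₂) :=
    φ.toLinearMap ∘ₗ g₁.baseChange R₁₂ ∘ₗ (freeBaseChangeEquiv R₁ R₁₂ n₁).symm.toLinearMap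
    with hu_def
  set v : (Fin n₂ → R₁₂) →ₗ[R₁₂] (R₁₂ ⊗[R₂] M₂) :=
    g₂.baseChange R₁₂ ∘ₗ (freeBaseChangeEquiv R₂ R₁₂ n₂).symm.toLinearMap with hv_def
  have hbc₁ : Function.Surjective (g₁.baseChange R₁₂) := g₁.lTensor_surjective _ hg₁
  have hbc₂ : Function.Surjective (g₂.baseChange R₁₂) := g₂.lTensor_surjective _ hg₂
  have hu : Function.Surjective u :=
    φ.surjective.comp (hbc₁.comp (freeBaseChangeEquiv R₁ R₁₂ n₁).symm.surjective)
  have hv : Function.Surjective v :=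
    hbc₂.comp (freeBaseChangeEquiv R₂ R₁₂ n₂).symm.surjective
  obtain ⟨a, ha⟩ := Module.projective_lifting_property v u hv
  obtain ⟨b, hb⟩ := Module.projective_lifting_property u v hu
  set α : (Fin n → R₁₂) ≃ₗ[R₁₂] (Fin n → R₁₂) :=
    (sumSplitEquiv R₁₂ n₁ n₂).trans ((elemUpper b).trans
      ((elemLower a).trans (sumSplitEquiv R₁₂ n₁ n₂).symm)) with hα
  refine ⟨n, α, g₁ ∘ₗ LinearMap.funLeft R₁ R₁ (Fin.castAdd n₂),
    g₂ ∘ₗ LinearMap.funLeft R₂ R₂ (Fin.natAdd n₁),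
    hg₁.comp (LinearMap.funLeft_surjective_of_injective _ _ _
      (Fin.castAdd_injective _ _)),
    hg₂.comp (LinearMap.funLeft_surjective_of_injective _ _ _
      (natAdd_injective _ _)), ?_⟩
  apply LinearMap.ext
  intro c
  set p : Fin n₁ → R₁₂ := LinearMap.funLeft R₁₂ R₁₂ (Fin.castAdd n₂) c with hp
  set q : Fin n₂ → R₁₂ := LinearMap.funLeft R₁₂ R₁₂ (Fin.natAdd n₁) c with hq
  have hαc : α c = appendLM R₁₂ n₁ n₂ (p - b q, q + a (p - b q)) := by
    simp only [hα, LinearEquiv.trans_apply, sumSplitEquiv, elemUpper, elemLower,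
      LinearEquiv.ofLinear_apply, LinearEquiv.ofLinear_symm_apply, LinearMap.prod_apply,
      Function.prod, LinearMap.sub_apply, LinearMap.add_apply, LinearMap.comp_apply,
      LinearMap.fst_apply, LinearMap.snd_apply, ← hp, ← hq]
  have lhs_eq : φ ((g₁ ∘ₗ LinearMap.funLeft R₁ R₁ (Fin.castAdd n₂)).baseChange R₁₂
      ((freeBaseChangeEquiv R₁ R₁₂ n).symm c)) = u p := by
    rw [baseChange_funLeft_castAdd]
    rfl
  have rhs_eq : (g₂ ∘ₗ LinearMap.funLeft R₂ R₂ (Fin.natAdd n₁)).baseChange R₁₂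
      ((freeBaseChangeEquiv R₂ R₁₂ n).symm (α c)) = v (q + a (p - b q)) := by
    rw [baseChange_funLeft_natAdd, hαc, funLeft_natAdd_appendLM]
    rfl
  have hva : ∀ x, v (a x) = u x := fun x => by rw [← ha]; rfl
  have hub : ∀ x, u (b x) = v x := fun x => by rw [← hb]; rfl
  have key : u p = v (q + a (p - b q)) := by
    rw [map_add, hva, map_sub, hub]
    abel
  simp only [LinearMap.comp_apply, LinearEquiv.coe_coe]
  rw [lhs_eq, rhs_eq, key]
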